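/- Let n ≥ 2 be even and let q > 0 be a real number that is not an integer. Set ω_μ = nq for μ = 1,…,n/2, ω_μ = −nq for μ = n/2+1,…,n, and k = (n, n, …, n). Then the number of equilibria in Θ_{ω,k}, i.e., θ ∈ (−π,π]^n satisfying the equilibrium equations and OC1, is exactly 2^n − Σ_{ℓ ∈ ℤ, −q < ℓ < q} C(n, n/2 + ℓ), where C(a,b) denotes the binomial coefficient. -/

import Mathlib

open scoped Classical

/-- `Θ_{ω,k}`: the set of equilibria of the rank-one coupled Kuramoto model lying in
`(-π,π]^n` and satisfying the output condition OC1. -/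
def kuramotoEquilibria (n : ℕ) (ω k : Fin n → ℝ) : Set (Fin n → ℝ) :=
  {θ | (∀ ν, θ ν ∈ Set.Ioc (-Real.pi) Real.pi) ∧
    (∀ ν, ω ν = (1 / (n : ℝ)) * ∑ μ, k ν * k μ * Real.sin (θ ν - θ μ)) ∧
    (∑ μ, k μ * Real.sin (θ μ) = 0 ∧ 0 ≤ ∑ μ, k μ * Real.cos (θ μ))}

namespace KurAux
open Real

lemma quad1 {x : ℝ} (hx : x ∈ Set.Ioc (-π) π) (hc : 0 < Real.cos x) :
    x = Real.arcsin (Real.sin x) := by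
  have hpi := Real.pi_pos
  have h1 : -(π/2) < x := by
    by_contra h
    push_neg at h
    have h2 : Real.cos (-x) ≤ 0 := by
      apply Real.cos_nonpos_of_pi_div_two_le_of_le (by linarith)
      linarith [hx.1]
    rw [Real.cos_neg] at h2; linarith
  have h2 : x < π/2 := by
    by_contra h
    push_neg at h
    have := Real.cos_nonpos_of_pi_div_two_le_of_le h (by linarith [hx.2])
    linarith
  exact (Real.arcsin_sin h1.le h2.le).symm

lemma quad2 {x : ℝ} (hx : x ∈ Set.Ioc (-π) π) (hc : Real.cos x < 0)
    (hs : 0 < Real.sin x) : x = π - Real.arcsin (Real.sin x) := by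
  have hpi := Real.pi_pos
  have hx0 : 0 < x := by
    by_contra h
    push_neg at h
    have : 0 ≤ Real.sin (-x) := Real.sin_nonneg_of_nonneg_of_le_pi (by linarith) (by linarith [hx.1])
    rw [Real.sin_neg] at this; linarith
  have hxpi : x < π := by
    rcases lt_or_eq_of_le hx.2 with h | h
    · exact h
    · rw [h] at hs; simp [Real.sin_pi] at hs
  have key : π - x = Real.arcsin (Real.sin (π - x)) := by
    apply quad1 ⟨by linarith, by linarith⟩
    rw [Real.cos_pi_sub]; linarith
  rw [Real.sin_pi_sub] at key
  linarith

lemma quad3 {x : ℝ} (hx : x ∈ Set.Ioc (-π) π) (hc : Real.cos x < 0)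
    (hs : Real.sin x < 0) : x = -π - Real.arcsin (Real.sin x) := by
  have hpi := Real.pi_pos
  have hx0 : x < 0 := by
    by_contra h
    push_neg at h
    have : 0 ≤ Real.sin x := Real.sin_nonneg_of_nonneg_of_le_pi h (hx.2)
    linarith
  have key : x + π = Real.arcsin (Real.sin (x + π)) := by
    apply quad1 ⟨by linarith [hx.1], by linarith [hx.1]⟩
    rw [Real.cos_add_pi]; linarith
  have hsin : Real.sin (x + π) = - Real.sin x := by
    rw [Real.sin_add_pi]
  rw [hsin, Real.arcsin_neg] at key
  linarith


/-- `sv M b q` : the value of `sin θ` for the two branches. -/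
noncomputable def sv (M : ℝ) (b : Bool) (q : ℝ) : ℝ :=
  Real.sqrt ((1 + (if b then 1 else -1) * Real.sqrt (1 - 4*q^2/M^2)) / 2)

lemma d_facts {M q : ℝ} (hq : 0 < q) (hM : 2*q < M) :
    0 < Real.sqrt (1 - 4*q^2/M^2) ∧ Real.sqrt (1 - 4*q^2/M^2) < 1 ∧
      (Real.sqrt (1 - 4*q^2/M^2))^2 = 1 - 4*q^2/M^2 := by
  have hM0 : 0 < M := by linarith
  have hD0 : 0 < 1 - 4*q^2/M^2 := by
    rw [sub_pos, div_lt_one (by positivity)]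
    nlinarith
  have hDsq : (Real.sqrt (1 - 4*q^2/M^2))^2 = 1 - 4*q^2/M^2 := Real.sq_sqrt hD0.le
  have hDpos : 0 < Real.sqrt (1 - 4*q^2/M^2) := Real.sqrt_pos.mpr hD0
  refine ⟨hDpos, ?_, hDsq⟩
  have h1 : 1 - 4*q^2/M^2 < 1 := by
    have : 0 < 4*q^2/M^2 := by positivity
    linarith
  nlinarith [hDsq, hDpos]

lemma sigma_cases (b : Bool) : ((if b then (1:ℝ) else -1) = 1 ∨ (if b then (1:ℝ) else -1) = -1) := by
  cases b <;> simp

lemma sv_sq {M q : ℝ} (hq : 0 < q) (hM : 2*q < M) (b : Bool) :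
    (sv M b q)^2 = (1 + (if b then 1 else -1) * Real.sqrt (1 - 4*q^2/M^2)) / 2 := by
  obtain ⟨hd0, hd1, hd2⟩ := d_facts hq hM
  apply Real.sq_sqrt
  rcases sigma_cases b with h | h <;> rw [h] <;> linarith

lemma sv_props {M q : ℝ} (hq : 0 < q) (hM : 2*q < M) (b : Bool) :
    0 < sv M b q ∧ sv M b q < 1 ∧
      M * sv M b q * Real.sqrt (1 - (sv M b q)^2) = q := by
  have hM0 : 0 < M := by linarith
  obtain ⟨hd0, hd1, hd2⟩ := d_facts hq hM
  have hsq := sv_sq hq hM b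
  set s := sv M b q with hs_def
  set d := Real.sqrt (1 - 4*q^2/M^2) with hd_def
  obtain hσ | hσ := sigma_cases b <;> rw [hσ] at hsq
  all_goals {
    have hs0 : 0 < s := by
      rw [hs_def]
      apply Real.sqrt_pos.mpr
      rw [hσ, ← hd_def]
      linarith
    have hs2lt : s^2 < 1 := by rw [hsq]; linarith
    have hs1 : s < 1 := by nlinarith
    refine ⟨hs0, hs1, ?_⟩
    have h1s : (0:ℝ) ≤ 1 - s^2 := by linarith
    have h2 : (Real.sqrt (1 - s^2))^2 = 1 - s^2 := Real.sq_sqrt h1s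
    have hq2M : q^2 = M^2 * (1 - d^2)/4 := by
      rw [hd2]; field_simp; ring
    have hexp : s^2 * (1 - s^2) = (1 - d^2)/4 := by rw [hsq]; ring
    have hmain : (M * s * Real.sqrt (1 - s^2))^2 = q^2 := by
      calc (M * s * Real.sqrt (1 - s^2))^2
          = M^2 * (s^2 * (1 - s^2)) := by rw [mul_pow, mul_pow, h2]; ring
        _ = q^2 := by rw [hexp, hq2M]; ring
    have hnn : 0 ≤ M * s * Real.sqrt (1 - s^2) := by positivity
    nlinarith [hmain, hnn] }

/-- Converse: recovering the branch. -/
lemma sv_conv {M q s : ℝ} (hq : 0 < q) (hM : 0 < M) (hMne : M ≠ 2*q)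
    (hs0 : 0 < s) (hs1 : s < 1) (heq : M * s * Real.sqrt (1 - s^2) = q) :
    2*q < M ∧ (s = sv M true q ∨ s = sv M false q) := by
  have h1s : (0:ℝ) ≤ 1 - s^2 := by nlinarith
  have h2 : (Real.sqrt (1 - s^2))^2 = 1 - s^2 := Real.sq_sqrt h1s
  have hmain : M^2 * (s^2 * (1 - s^2)) = q^2 := by
    have h3 : (M * s * Real.sqrt (1 - s^2))^2 = q^2 := by rw [heq]
    rw [mul_pow, mul_pow, h2] at h3
    linarith [h3]
  have h4 : 4*(s^2*(1-s^2)) ≤ 1 := by nlinarith [sq_nonneg (2*s^2-1)]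
  have h5 : 4*q^2 ≤ M^2 := by nlinarith [sq_nonneg M]
  have hle : 2*q ≤ M := by nlinarith
  have hMgt : 2*q < M := lt_of_le_of_ne hle (fun h => hMne h.symm)
  refine ⟨hMgt, ?_⟩
  obtain ⟨hd0, hd1, hd2⟩ := d_facts hq hMgt
  set d := Real.sqrt (1 - 4*q^2/M^2) with hd_def
  have hM2 : (M:ℝ)^2 ≠ 0 := by positivity
  have hq2M : q^2 = M^2 * (1 - d^2)/4 := by rw [hd2]; field_simp; ring
  have hkey : (s^2 - 1/2)^2 = (d/2)^2 := by
    have hmul : M^2 * ((s^2 - 1/2)^2) = M^2 * ((d/2)^2) := by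
      linear_combination -hmain - hq2M
    exact mul_left_cancel₀ hM2 hmul
  rcases sq_eq_sq_iff_eq_or_eq_neg.mp hkey with h | h
  · left
    have ht : s^2 = (1 + 1 * d)/2 := by linarith
    rw [show s = Real.sqrt (s^2) from (Real.sqrt_sq hs0.le).symm, ht]
    simp only [sv, ← hd_def, if_true]
  · right
    have ht : s^2 = (1 + (-1) * d)/2 := by linarith
    rw [show s = Real.sqrt (s^2) from (Real.sqrt_sq hs0.le).symm, ht]
    simp only [sv, ← hd_def, Bool.false_eq_true, if_false]


/-- The (real-valued) quantity `2 j - n`, `j` the number of `true`s. -/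
noncomputable def Mv (n : ℕ) (ε : Fin n → Bool) : ℝ :=
  2 * ((Finset.univ.filter (fun ν => ε ν = true)).card : ℝ) - n

noncomputable def Fmap (n : ℕ) (q : ℝ) (ε : Fin n → Bool) (b : Bool) : Fin n → ℝ :=
  fun ν =>
    if (ν : ℕ) < n / 2 then
      (if ε ν then Real.arcsin (sv (Mv n ε) b q)
       else Real.pi - Real.arcsin (sv (Mv n ε) b q))
    else
      (if ε ν then -Real.arcsin (sv (Mv n ε) b q)
       else Real.arcsin (sv (Mv n ε) b q) - Real.pi)

lemma Fmap_sin {n : ℕ} {q : ℝ} {ε : Fin n → Bool} {b : Bool}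
    (hs0 : -1 ≤ sv (Mv n ε) b q) (hs1 : sv (Mv n ε) b q ≤ 1) (ν : Fin n) :
    Real.sin (Fmap n q ε b ν) =
      if (ν : ℕ) < n / 2 then sv (Mv n ε) b q else -(sv (Mv n ε) b q) := by
  set s := sv (Mv n ε) b q
  unfold Fmap
  by_cases hν : (ν : ℕ) < n / 2 <;> by_cases hε : ε ν <;>
    simp [hν, hε, Real.sin_pi_sub, Real.sin_sub_pi, Real.sin_neg,
      Real.sin_arcsin hs0 hs1] <;> exact Real.sin_arcsin hs0 hs1

lemma Fmap_cos {n : ℕ} {q : ℝ} {ε : Fin n → Bool} {b : Bool} (ν : Fin n) :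
    Real.cos (Fmap n q ε b ν) =
      if ε ν then Real.sqrt (1 - (sv (Mv n ε) b q)^2)
      else -(Real.sqrt (1 - (sv (Mv n ε) b q)^2)) := by
  set s := sv (Mv n ε) b q
  unfold Fmap
  by_cases hν : (ν : ℕ) < n / 2 <;> by_cases hε : ε ν <;>
    simp [hν, hε, Real.cos_pi_sub, Real.cos_sub_pi, Real.cos_neg,
      Real.cos_arcsin] <;> rfl

lemma card_lt_filter (n h : ℕ) (hh : h ≤ n) :
    (Finset.univ.filter (fun ν : Fin n => (ν : ℕ) < h)).card = h := by
  have hr : (Finset.range n).filter (fun i => i < h) = Finset.range h := by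
    ext i; simp only [Finset.mem_filter, Finset.mem_range]; omega
  calc (Finset.univ.filter (fun ν : Fin n => (ν : ℕ) < h)).card
      = ∑ ν : Fin n, if (ν : ℕ) < h then 1 else 0 := Finset.card_filter _ _
    _ = ∑ i ∈ Finset.range n, if i < h then 1 else 0 :=
        Fin.sum_univ_eq_sum_range (fun i => if i < h then 1 else 0) n
    _ = ((Finset.range n).filter (fun i => i < h)).card := (Finset.card_filter _ _).symm
    _ = h := by rw [hr, Finset.card_range]

lemma sum_ite_halves (n : ℕ) (hev : 2 * (n / 2) = n) (s : ℝ) :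
    ∑ ν : Fin n, (if (ν : ℕ) < n / 2 then s else -s) = 0 := by
  rw [Finset.sum_ite, Finset.sum_const, Finset.sum_const]
  have h1 : (Finset.univ.filter (fun ν : Fin n => (ν : ℕ) < n / 2)).card = n / 2 :=
    card_lt_filter n (n / 2) (by omega)
  have h2 : (Finset.univ.filter (fun ν : Fin n => ¬ ((ν : ℕ) < n / 2))).card = n - n / 2 := by
    have := Finset.card_filter_add_card_filter_not
      (s := (Finset.univ : Finset (Fin n))) (fun ν : Fin n => (ν : ℕ) < n / 2)
    rw [h1, Finset.card_univ, Fintype.card_fin] at this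
    omega
  rw [h1, h2]
  have : n - n / 2 = n / 2 := by omega
  rw [this]
  simp [nsmul_eq_mul]

lemma sum_ite_bool (n : ℕ) (ε : Fin n → Bool) (c : ℝ) :
    ∑ ν : Fin n, (if ε ν then c else -c) = Mv n ε * c := by
  rw [Finset.sum_ite, Finset.sum_const, Finset.sum_const]
  have h2 : (Finset.univ.filter (fun ν : Fin n => ¬ (ε ν = true))).card
      = n - (Finset.univ.filter (fun ν : Fin n => ε ν = true)).card := by
    have := Finset.card_filter_add_card_filter_not
      (s := (Finset.univ : Finset (Fin n))) (fun ν : Fin n => ε ν = true)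
    rw [Finset.card_univ, Fintype.card_fin] at this
    omega
  have hle : (Finset.univ.filter (fun ν : Fin n => ε ν = true)).card ≤ n := by
    have := Finset.card_filter_le (Finset.univ : Finset (Fin n)) (fun ν : Fin n => ε ν = true)
    rwa [Finset.card_univ, Fintype.card_fin] at this
  have hconv : ∀ p : Fin n → Prop, (hp : DecidablePred p) →
      (Finset.univ.filter (fun ν : Fin n => ε ν)).card
        = (Finset.univ.filter (fun ν : Fin n => ε ν = true)).card := by
    intro _ _; simp
  rw [Mv]
  -- the filters `fun ν => ε ν` and `fun ν => ε ν = true` coincide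
  have hfeq : (Finset.univ.filter (fun ν : Fin n => ε ν)) =
      (Finset.univ.filter (fun ν : Fin n => ε ν = true)) := by
    apply Finset.filter_congr; intro ν _; simp
  rw [hfeq, h2]
  set j := (Finset.univ.filter (fun ν : Fin n => ε ν = true)).card
  simp only [nsmul_eq_mul]
  push_cast [Nat.cast_sub hle]
  ring


def omg (n : ℕ) (q : ℝ) : Fin n → ℝ :=
  fun μ => if (μ : ℕ) < n / 2 then (n : ℝ) * q else -((n : ℝ) * q)

lemma expand_sum (n : ℕ) (θ : Fin n → ℝ) (ν : Fin n) :
    ∑ μ, (n : ℝ) * (n : ℝ) * Real.sin (θ ν - θ μ) =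
      (n : ℝ)^2 * (Real.sin (θ ν) * (∑ μ, Real.cos (θ μ))
        - Real.cos (θ ν) * (∑ μ, Real.sin (θ μ))) := by
  have h : ∀ μ : Fin n, (n : ℝ) * n * Real.sin (θ ν - θ μ)
      = ((n:ℝ)^2 * Real.sin (θ ν)) * Real.cos (θ μ)
        - ((n:ℝ)^2 * Real.cos (θ ν)) * Real.sin (θ μ) := by
    intro μ; rw [Real.sin_sub]; ring
  rw [Finset.sum_congr rfl (fun μ _ => h μ), Finset.sum_sub_distrib,
    ← Finset.mul_sum, ← Finset.mul_sum]
  ring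

lemma mem_iff (n : ℕ) (hn0 : 0 < n) (q : ℝ) (θ : Fin n → ℝ) :
    θ ∈ kuramotoEquilibria n (omg n q) (fun _ => (n : ℝ)) ↔
      ((∀ ν, θ ν ∈ Set.Ioc (-Real.pi) Real.pi) ∧
       (∀ ν : Fin n, Real.sin (θ ν) * (∑ μ, Real.cos (θ μ))
          = (if (ν : ℕ) < n / 2 then q else -q)) ∧
       (∑ μ, Real.sin (θ μ)) = 0 ∧ 0 ≤ ∑ μ, Real.cos (θ μ)) := by
  have hnR : (0 : ℝ) < n := by exact_mod_cast hn0
  have hnne : (n : ℝ) ≠ 0 := ne_of_gt hnR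
  constructor
  · rintro ⟨h1, h2, h3, h4⟩
    have hsin0 : ∑ μ, Real.sin (θ μ) = 0 := by
      rw [← Finset.mul_sum] at h3
      rcases mul_eq_zero.mp h3 with h | h
      · exact absurd h hnne
      · exact h
    have hcos0 : 0 ≤ ∑ μ, Real.cos (θ μ) := by
      rw [← Finset.mul_sum] at h4
      exact nonneg_of_mul_nonneg_right h4 hnR
    refine ⟨h1, ?_, hsin0, hcos0⟩
    intro ν
    have heq := h2 ν
    rw [expand_sum, hsin0] at heq
    simp only [omg] at heq
    by_cases hν : (ν : ℕ) < n / 2 <;> simp only [hν, if_true, if_false] at heq ⊢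
    · field_simp at heq
      have heq' : (n:ℝ)^2 * q = (n:ℝ)^2 * (Real.sin (θ ν) * ∑ μ, Real.cos (θ μ)) := by
        linear_combination (n:ℝ)^2 * heq
      exact (mul_left_cancel₀ (by positivity) heq').symm
    · field_simp at heq
      have heq' : (n:ℝ)^2 * (-q) = (n:ℝ)^2 * (Real.sin (θ ν) * ∑ μ, Real.cos (θ μ)) := by
        linear_combination (n:ℝ)^2 * heq
      exact (mul_left_cancel₀ (by positivity) heq').symm
  · rintro ⟨h1, h2, h3, h4⟩
    refine ⟨h1, ?_, ?_, ?_⟩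
    · intro ν
      rw [expand_sum, h3]
      have heq := h2 ν
      simp only [omg]
      by_cases hν : (ν : ℕ) < n / 2 <;> simp only [hν, if_true, if_false] at heq ⊢ <;>
        (field_simp; linear_combination -heq)
    · rw [← Finset.mul_sum, h3, mul_zero]
    · rw [← Finset.mul_sum]
      positivity

lemma Fmap_mem (n : ℕ) (hn0 : 0 < n) (hev : 2 * (n / 2) = n) {q : ℝ} (hq : 0 < q)
    (ε : Fin n → Bool) (b : Bool) (hM : 2 * q < Mv n ε) :
    Fmap n q ε b ∈ kuramotoEquilibria n (omg n q) (fun _ => (n : ℝ)) := by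
  obtain ⟨hs0, hs1, hkey⟩ := sv_props hq hM b
  set s := sv (Mv n ε) b q with hs_def
  set c := Real.sqrt (1 - s^2) with hc_def
  have hc0 : 0 ≤ c := Real.sqrt_nonneg _
  have hsin := Fmap_sin (n := n) (q := q) (ε := ε) (b := b) (by linarith) hs1.le
  have hcos := Fmap_cos (n := n) (q := q) (ε := ε) (b := b)
  have hsum_sin : ∑ μ, Real.sin (Fmap n q ε b μ) = 0 := by
    rw [Finset.sum_congr rfl (fun μ _ => hsin μ)]
    exact sum_ite_halves n hev s
  have hsum_cos : ∑ μ, Real.cos (Fmap n q ε b μ) = Mv n ε * c := by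
    rw [Finset.sum_congr rfl (fun μ _ => hcos μ)]
    exact sum_ite_bool n ε c
  rw [mem_iff n hn0 q]
  have hpi := Real.pi_pos
  have ha0 : 0 < Real.arcsin s := Real.arcsin_pos.mpr hs0
  have ha1 : Real.arcsin s < Real.pi / 2 := Real.arcsin_lt_pi_div_two.mpr hs1
  refine ⟨?_, ?_, hsum_sin, ?_⟩
  · intro ν
    unfold Fmap
    rw [← hs_def]
    by_cases hν : (ν : ℕ) < n / 2 <;> by_cases hε : ε ν <;>
      simp only [hν, hε, if_true, if_false, Bool.false_eq_true, Set.mem_Ioc] <;>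
      exact ⟨by linarith, by linarith⟩
  · intro ν
    rw [hsum_cos, hsin ν]
    by_cases hν : (ν : ℕ) < n / 2 <;> simp only [hν, if_true, if_false]
    · linear_combination hkey
    · linear_combination -hkey
  · rw [hsum_cos]
    have : 0 < Mv n ε := by linarith
    positivity

lemma sv_inj {M q : ℝ} (hq : 0 < q) (hM : 2*q < M) {b b' : Bool}
    (h : sv M b q = sv M b' q) : b = b' := by
  obtain ⟨hd0, hd1, hd2⟩ := d_facts hq hM
  have h1 := sv_sq hq hM b
  have h2 := sv_sq hq hM b'
  rw [h, h2] at h1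
  cases b <;> cases b' <;> first
    | rfl
    | (exfalso;
       simp only [if_true, if_false, Bool.false_eq_true] at h1;
       linarith)

lemma Fmap_inj (n : ℕ) (hn0 : 0 < n) {q : ℝ} (hq : 0 < q)
    {ε ε' : Fin n → Bool} {b b' : Bool} (hM : 2*q < Mv n ε) (hM' : 2*q < Mv n ε')
    (heq : Fmap n q ε b = Fmap n q ε' b') : ε = ε' ∧ b = b' := by
  obtain ⟨hs0, hs1, _⟩ := sv_props hq hM b
  obtain ⟨hs0', hs1', _⟩ := sv_props hq hM' b'
  have hc : 0 < Real.sqrt (1 - (sv (Mv n ε) b q)^2) :=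
    Real.sqrt_pos.mpr (by nlinarith)
  have hc' : 0 < Real.sqrt (1 - (sv (Mv n ε') b' q)^2) :=
    Real.sqrt_pos.mpr (by nlinarith)
  have hεε : ε = ε' := by
    funext ν
    have hfν := congrFun heq ν
    have h1 := Fmap_cos (n := n) (q := q) (ε := ε) (b := b) ν
    have h2 := Fmap_cos (n := n) (q := q) (ε := ε') (b := b') ν
    rw [hfν, h2] at h1
    by_cases hε : ε ν <;> by_cases hε' : ε' ν <;>
      simp only [hε, hε', if_true, if_false, Bool.false_eq_true] at h1 ⊢ <;>
      first | rfl | linarith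
  subst hεε
  refine ⟨rfl, ?_⟩
  have hfν := congrFun heq ⟨0, hn0⟩
  have g1 := Fmap_sin (n := n) (q := q) (ε := ε) (b := b) (by linarith) hs1.le ⟨0, hn0⟩
  have g2 := Fmap_sin (n := n) (q := q) (ε := ε) (b := b') (by linarith) hs1'.le ⟨0, hn0⟩
  rw [hfν, g2] at g1
  apply sv_inj hq hM
  by_cases hν : ((⟨0, hn0⟩ : Fin n) : ℕ) < n / 2 <;>
    simp only [hν, if_true, if_false] at g1 <;> linarith

lemma Fmap_surj (n : ℕ) (hn0 : 0 < n) (hh0 : 0 < n / 2) (hev : 2 * (n / 2) = n)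
    {q : ℝ} (hq : 0 < q) (hqint : ∀ m : ℤ, q ≠ (m : ℝ)) {θ : Fin n → ℝ}
    (hθ : θ ∈ kuramotoEquilibria n (omg n q) (fun _ => (n : ℝ))) :
    ∃ ε b, 2*q < Mv n ε ∧ θ = Fmap n q ε b := by
  rw [mem_iff n hn0 q] at hθ
  obtain ⟨hrange, heqn, hsin0, hC0⟩ := hθ
  obtain ⟨C, hC_def⟩ : ∃ C, C = ∑ μ, Real.cos (θ μ) := ⟨_, rfl⟩
  rw [← hC_def] at heqn hC0
  have hν0 : ((⟨0, hn0⟩ : Fin n) : ℕ) < n / 2 := hh0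
  have h0 := heqn ⟨0, hn0⟩
  rw [if_pos hν0] at h0
  have hCpos : 0 < C := by
    rcases hC0.lt_or_eq with h | h
    · exact h
    · exfalso; rw [← h, mul_zero] at h0; linarith
  obtain ⟨s, hs_def⟩ : ∃ s, s = q / C := ⟨_, rfl⟩
  have hs0 : 0 < s := hs_def ▸ div_pos hq hCpos
  have hsin : ∀ ν, Real.sin (θ ν) = if (ν : ℕ) < n / 2 then s else -s := by
    intro ν
    have hv := heqn ν
    by_cases hν : (ν : ℕ) < n / 2 <;> rw [hs_def] <;>
      simp only [hν, if_true, if_false] at hv ⊢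
    · rw [eq_div_iff hCpos.ne']; exact hv
    · have h2 : Real.sin (θ ν) = (-q) / C := by rw [eq_div_iff hCpos.ne']; exact hv
      rw [h2]; ring
  have hs_le : s ≤ 1 := by
    have h1 := Real.sin_le_one (θ ⟨0, hn0⟩)
    rw [hsin ⟨0, hn0⟩, if_pos hν0] at h1
    exact h1
  have hs1 : s < 1 := by
    rcases lt_or_eq_of_le hs_le with h | h
    · exact h
    · exfalso
      have hcosz : ∀ ν, Real.cos (θ ν) = 0 := by
        intro ν
        have h2 : Real.sin (θ ν)^2 = 1 := by
          rw [hsin ν, h]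
          by_cases hν : (ν : ℕ) < n / 2 <;> norm_num [hν]
        have h3 : Real.cos (θ ν)^2 = 0 := by
          nlinarith [Real.sin_sq_add_cos_sq (θ ν)]
        exact pow_eq_zero_iff (n := 2) (by norm_num) |>.mp h3
      have hz : C = 0 := by
        rw [hC_def]
        exact Finset.sum_eq_zero (fun ν _ => hcosz ν)
      linarith
  obtain ⟨c, hc_def⟩ : ∃ c, c = Real.sqrt (1 - s^2) := ⟨_, rfl⟩
  have hc0 : 0 < c := hc_def ▸ Real.sqrt_pos.mpr (by nlinarith)
  have hc2 : c^2 = 1 - s^2 := hc_def ▸ Real.sq_sqrt (by nlinarith)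
  obtain ⟨ε, hε_def⟩ : ∃ ε : Fin n → Bool, ε = fun ν => decide (0 < Real.cos (θ ν)) :=
    ⟨_, rfl⟩
  have hcos : ∀ ν, Real.cos (θ ν) = if ε ν then c else -c := by
    intro ν
    have hsq : Real.cos (θ ν)^2 = c^2 := by
      have h2 : Real.sin (θ ν)^2 = s^2 := by
        rw [hsin ν]
        by_cases hν : (ν : ℕ) < n / 2 <;> simp only [hν, if_true, if_false] <;> ring
      nlinarith [Real.sin_sq_add_cos_sq (θ ν)]
    have hmean : (ε ν = true) ↔ 0 < Real.cos (θ ν) := by rw [hε_def]; simp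
    rcases sq_eq_sq_iff_eq_or_eq_neg.mp hsq with h | h
    · rw [if_pos (hmean.mpr (by rw [h]; exact hc0))]; exact h
    · rw [if_neg (fun hb => by have h2 := hmean.mp hb; rw [h] at h2; linarith)]; exact h
  have hMc : C = Mv n ε * c := by
    rw [hC_def, Finset.sum_congr rfl (fun μ _ => hcos μ)]
    exact sum_ite_bool n ε c
  have hMpos : 0 < Mv n ε := by
    by_contra hcon
    push_neg at hcon
    nlinarith [hMc, hc0, hCpos]
  have hkey : Mv n ε * s * c = q := by
    rw [hs_def]
    field_simp
    linear_combination -hMc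
  have hMne : Mv n ε ≠ 2*q := by
    intro hcon
    have hnn : (n : ℝ) = 2 * ((n / 2 : ℕ) : ℝ) := by exact_mod_cast hev.symm
    rw [Mv] at hcon
    obtain ⟨k, hk⟩ : ∃ k, k = n / 2 := ⟨_, rfl⟩
    rw [← hk] at hnn
    have hq2 : q = ((Finset.univ.filter (fun ν => ε ν = true)).card : ℝ)
        - (k : ℝ) := by linarith
    exact hqint (((Finset.univ.filter (fun ν => ε ν = true)).card : ℤ) - (k : ℤ))
      (by rw [hq2]; push_cast; ring)
  have hkey' : Mv n ε * s * Real.sqrt (1 - s^2) = q := by rw [← hc_def]; exact hkey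
  obtain ⟨hMgt, hb⟩ := sv_conv hq hMpos hMne hs0 hs1 hkey'
  have hbex : ∃ b, s = sv (Mv n ε) b q := by
    rcases hb with h | h
    · exact ⟨true, h⟩
    · exact ⟨false, h⟩
  obtain ⟨b, hsb⟩ := hbex
  refine ⟨ε, b, hMgt, ?_⟩
  funext ν
  have hrν := hrange ν
  by_cases hν : (ν : ℕ) < n / 2 <;> by_cases hε : ε ν <;>
    simp only [Fmap, hν, hε, if_true, if_false, Bool.false_eq_true, ← hsb]
  · have h1 : 0 < Real.cos (θ ν) := by rw [hcos ν, if_pos hε]; exact hc0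
    have := quad1 hrν h1
    rw [hsin ν, if_pos hν] at this
    exact this
  · have h1 : Real.cos (θ ν) < 0 := by
      rw [hcos ν, if_neg (by simp [hε])]; linarith
    have h2 : 0 < Real.sin (θ ν) := by rw [hsin ν, if_pos hν]; exact hs0
    have := quad2 hrν h1 h2
    rw [hsin ν, if_pos hν] at this
    linarith [this]
  · have h1 : 0 < Real.cos (θ ν) := by rw [hcos ν, if_pos hε]; exact hc0
    have := quad1 hrν h1
    rw [hsin ν, if_neg hν, Real.arcsin_neg] at this
    linarith [this]
  · have h1 : Real.cos (θ ν) < 0 := by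
      rw [hcos ν, if_neg (by simp [hε])]; linarith
    have h2 : Real.sin (θ ν) < 0 := by rw [hsin ν, if_neg hν]; linarith
    have := quad3 hrν h1 h2
    rw [hsin ν, if_neg hν, Real.arcsin_neg] at this
    linarith [this]

lemma card_filter_bool (n : ℕ) (P : ℕ → Prop) [DecidablePred P] :
    (Finset.univ.filter (fun ε : Fin n → Bool =>
        P (Finset.univ.filter (fun ν => ε ν = true)).card)).card
      = ∑ j ∈ Finset.range (n+1), if P j then n.choose j else 0 := by
  have h1 : (Finset.univ.filter (fun ε : Fin n → Bool =>
        P (Finset.univ.filter (fun ν => ε ν = true)).card)).card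
      = (Finset.univ.filter (fun t : Finset (Fin n) => P t.card)).card := by
    apply Finset.card_bij (fun ε _ => Finset.univ.filter (fun ν => ε ν = true))
    · intro ε hε
      simp only [Finset.mem_filter, Finset.mem_univ, true_and] at hε ⊢
      exact hε
    · intro ε1 h1 ε2 h2 heq
      funext ν
      have hh := Finset.ext_iff.mp heq ν
      simp only [Finset.mem_filter, Finset.mem_univ, true_and] at hh
      exact Bool.eq_iff_iff.mpr hh
    · intro t ht2
      simp only [Finset.mem_filter, Finset.mem_univ, true_and] at ht2
      refine ⟨fun ν => decide (ν ∈ t), ?_, ?_⟩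
      · have ht : Finset.univ.filter (fun ν : Fin n => decide (ν ∈ t) = true) = t := by
          ext ν; simp
        simp only [Finset.mem_filter, Finset.mem_univ, true_and, ht]
        exact ht2
      · ext ν; simp
  rw [h1, Finset.card_filter, ← Finset.powerset_univ, Finset.sum_powerset]
  have hcard : (Finset.univ : Finset (Fin n)).card = n := by
    rw [Finset.card_univ, Fintype.card_fin]
  rw [hcard]
  apply Finset.sum_congr rfl
  intro j _
  have hinner : ∀ t ∈ Finset.powersetCard j (Finset.univ : Finset (Fin n)),
      (if P t.card then (1:ℕ) else 0) = (if P j then 1 else 0) := by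
    intro t ht
    rw [(Finset.mem_powersetCard.mp ht).2]
  rw [Finset.sum_congr rfl hinner, Finset.sum_const, Finset.card_powersetCard, hcard]
  by_cases hP : P j <;> simp [hP]

lemma sum_reflect (n : ℕ) (q : ℝ) :
    ∑ j ∈ Finset.range (n+1), (if (j:ℝ) - (n:ℝ)/2 < -q then n.choose j else 0)
      = ∑ j ∈ Finset.range (n+1), (if q < (j:ℝ) - (n:ℝ)/2 then n.choose j else 0) := by
  apply Finset.sum_nbij' (fun j => n - j) (fun j => n - j)
  · intro j hj; rw [Finset.mem_range] at hj ⊢; omega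
  · intro j hj; rw [Finset.mem_range] at hj ⊢; omega
  · intro j hj; rw [Finset.mem_range] at hj; omega
  · intro j hj; rw [Finset.mem_range] at hj; omega
  · intro j hj
    rw [Finset.mem_range] at hj
    have hjn : j ≤ n := by omega
    rw [Nat.cast_sub hjn, Nat.choose_symm hjn]
    apply if_congr ?_ rfl rfl
    constructor <;> intro <;> linarith

lemma ite_trichotomy {x q : ℝ} (hq : 0 < q) (hx1 : x ≠ q) (hx2 : x ≠ -q) (c : ℕ) :
    (if q < x then c else 0) + (if x < -q then c else 0) + (if |x| < q then c else 0)
      = c := by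
  rcases lt_trichotomy x (-q) with h | h | h
  · rw [if_neg (by push_neg; linarith), if_pos h,
      if_neg (by rw [abs_lt]; push_neg; intro h2; linarith)]
    omega
  · exact absurd h hx2
  · rcases lt_trichotomy x q with h2 | h2 | h2
    · rw [if_neg (by push_neg; linarith), if_neg (by push_neg; linarith),
        if_pos (abs_lt.mpr ⟨by linarith, h2⟩)]
      omega
    · exact absurd h2 hx1
    · rw [if_pos h2, if_neg (by push_neg; linarith),
        if_neg (by rw [abs_lt]; push_neg; intro h3; linarith)]
      omega

lemma sum_trichotomy (n : ℕ) (hev : 2 * (n / 2) = n) {q : ℝ} (hq : 0 < q)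
    (hqint : ∀ m : ℤ, q ≠ (m : ℝ)) :
    (∑ j ∈ Finset.range (n+1), (if q < (j:ℝ) - (n:ℝ)/2 then n.choose j else 0))
    + (∑ j ∈ Finset.range (n+1), (if (j:ℝ) - (n:ℝ)/2 < -q then n.choose j else 0))
    + (∑ j ∈ Finset.range (n+1), (if |(j:ℝ) - (n:ℝ)/2| < q then n.choose j else 0))
      = 2^n := by
  rw [← Finset.sum_add_distrib, ← Finset.sum_add_distrib, ← Nat.sum_range_choose n]
  apply Finset.sum_congr rfl
  intro j _
  obtain ⟨k, hk⟩ : ∃ k, k = n / 2 := ⟨_, rfl⟩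
  have hnk : (n : ℝ) = 2 * (k : ℝ) := by
    rw [hk]; exact_mod_cast hev.symm
  have hx1 : (j:ℝ) - (n:ℝ)/2 ≠ q := by
    intro h
    exact hqint ((j:ℤ) - (k:ℤ)) (by push_cast; linarith)
  have hx2 : (j:ℝ) - (n:ℝ)/2 ≠ -q := by
    intro h
    exact hqint ((k:ℤ) - (j:ℤ)) (by push_cast; linarith)
  exact ite_trichotomy hq hx1 hx2 (n.choose j)

end KurAux

/-- Theorem 4.4: let `n ≥ 2` be even and let `q > 0` be a non-integer
real.  For `ω = (nq,…,nq,-nq,…,-nq)` and `k = (n,…,n)`, the number of equilibria in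
`Θ_{ω,k}` is exactly `2^n - ∑_{ℓ ∈ ℤ, -q < ℓ < q} C(n, n/2 + ℓ)` (the sum written
here over `j = n/2 + ℓ ∈ {0,…,n}` with `|j - n/2| < q`). -/
theorem card_equilibria_even_case (n : ℕ) (hn : 2 ≤ n) (heven : Even n)
    (q : ℝ) (hq : 0 < q) (hqint : ∀ m : ℤ, q ≠ (m : ℝ)) :
    (kuramotoEquilibria n
        (fun μ => if (μ : ℕ) < n / 2 then (n : ℝ) * q else -((n : ℝ) * q))
        (fun _ => (n : ℝ))).ncard =
      2 ^ n - ∑ j ∈ Finset.range (n + 1),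
        if |(j : ℝ) - (n : ℝ) / 2| < q then n.choose j else 0 := by
  classical
  have hn0 : 0 < n := by omega
  have hev : 2 * (n / 2) = n := by
    obtain ⟨c, hc⟩ := heven; omega
  have hh0 : 0 < n / 2 := by omega
  set A := (Finset.univ.filter (fun ε : Fin n → Bool => 2*q < KurAux.Mv n ε)) ×ˢ
    (Finset.univ : Finset Bool) with hA_def
  have hset : kuramotoEquilibria n
      (fun μ => if (μ : ℕ) < n / 2 then (n : ℝ) * q else -((n : ℝ) * q))
      (fun _ => (n : ℝ))
      = (fun p : (Fin n → Bool) × Bool => KurAux.Fmap n q p.1 p.2) '' ↑A := by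
    ext θ
    constructor
    · intro hθ
      obtain ⟨ε, b, hM, hθeq⟩ := KurAux.Fmap_surj n hn0 hh0 hev hq hqint hθ
      refine ⟨(ε, b), ?_, hθeq.symm⟩
      rw [hA_def]
      simp only [Finset.coe_filter, Finset.mem_coe, Finset.mem_product,
        Finset.mem_filter, Finset.mem_univ, true_and, and_true]
      exact hM
    · rintro ⟨⟨ε, b⟩, hp, rfl⟩
      rw [hA_def] at hp
      simp only [Finset.mem_coe, Finset.mem_product, Finset.mem_filter,
        Finset.mem_univ, true_and, and_true] at hp
      exact KurAux.Fmap_mem n hn0 hev hq ε b hp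
  have hinj : Set.InjOn (fun p : (Fin n → Bool) × Bool => KurAux.Fmap n q p.1 p.2) ↑A := by
    rintro ⟨ε, b⟩ hp ⟨ε', b'⟩ hp' heq
    rw [hA_def] at hp hp'
    simp only [Finset.mem_coe, Finset.mem_product, Finset.mem_filter,
      Finset.mem_univ, true_and, and_true] at hp hp'
    obtain ⟨h1, h2⟩ := KurAux.Fmap_inj n hn0 hq hp hp' heq
    rw [Prod.mk.injEq]
    exact ⟨h1, h2⟩
  rw [hset, Set.ncard_image_of_injOn hinj, Set.ncard_coe_finset, hA_def,
    Finset.card_product]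
  have hbool : (Finset.univ : Finset Bool).card = 2 := by simp
  rw [hbool]
  have hfeq : (Finset.univ.filter (fun ε : Fin n → Bool => 2*q < KurAux.Mv n ε))
      = (Finset.univ.filter (fun ε : Fin n → Bool =>
          q < ((Finset.univ.filter (fun ν => ε ν = true)).card : ℝ) - (n:ℝ)/2)) := by
    apply Finset.filter_congr
    intro ε _
    rw [KurAux.Mv]
    constructor <;> intro h <;> linarith
  rw [hfeq, KurAux.card_filter_bool n (fun j => q < (j:ℝ) - (n:ℝ)/2)]
  have htri := KurAux.sum_trichotomy n hev hq hqint
  have hrefl := KurAux.sum_reflect n q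
  rw [← htri, hrefl]
  omega
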